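/- Let {𝒮_j}_{j=1}^q be an orthogonal (Σ_t)_{t∈T}-decorrelating partition and suppose 𝒮_j is opt-invariant on T. Then the unique maximizer over 𝒮_j of the averaged explained variance β ↦ (1/n)∑_{t∈T} ΔVar_t(β) equals Π_{𝒮_j} γ_t for every t ∈ T, hence equals Π_{𝒮_j} γ̄ with γ̄ := (1/n)∑_{t∈T} γ_t; moreover Π_{𝒮_j} γ̄ is time-invariant over T, i.e., (γ_t − Π_{𝒮_j}γ̄)ᵀ Σ_t (Π_{𝒮_j}γ̄) = 0 for every t ∈ T. -/

import Mathlib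

open Matrix Finset MeasureTheory

noncomputable section

/-- Vectors in `ℝ^p`. -/
abbrev Vec (p : ℕ) : Type := Fin p → ℝ

/-- Real `p × p` matrices. -/
abbrev Mat (p : ℕ) : Type := Matrix (Fin p) (Fin p) ℝ

/-- Explained variance `ΔVar(β) = 2 γᵀ C β − βᵀ C β` at a time with covariance `C`
and true parameter `γ`. -/
def dVar {p : ℕ} (C : Mat p) (γ β : Vec p) : ℝ :=
  2 * (γ ⬝ᵥ (C *ᵥ β)) - β ⬝ᵥ (C *ᵥ β)

/-- `β₀` is the unique maximizer of `f` over the linear subspace whose orthogonal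
projection matrix is `P` (membership in the subspace is expressed as `P *ᵥ β = β`). -/
def IsUMaxOn {p : ℕ} (f : Vec p → ℝ) (P : Mat p) (β₀ : Vec p) : Prop :=
  P *ᵥ β₀ = β₀ ∧ ∀ β : Vec p, P *ᵥ β = β → β ≠ β₀ → f β < f β₀

/-- The matrices `P j` are the orthogonal projection matrices of a family of pairwise
orthogonal nonzero linear subspaces of `ℝ^p` whose direct sum is `ℝ^p`. -/
structure OrthPartition (p q : ℕ) (P : Fin q → Mat p) : Prop where
  symm : ∀ j, (P j)ᵀ = P j
  idem : ∀ j, P j * P j = P j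
  nonzero : ∀ j, P j ≠ 0
  orth : ∀ i j, i ≠ j → P i * P j = 0
  sum_one : ∑ j, P j = 1

/-- second part of Lemma A.7 of the paper: if `𝒮_j` is
opt-invariant on `{1,…,n}`, the unique maximizer over `𝒮_j` of the averaged explained
variance equals `Π_j γ_t` for every `t`, hence equals `Π_j γ̄`; moreover `Π_j γ̄` is
time-invariant over `{1,…,n}`. -/
theorem stmt16 {p n q : ℕ} (hp : 1 ≤ p) (hn : 1 ≤ n)
    (Cov : Fin n → Mat p) (hCov : ∀ t, (Cov t).PosDef)
    (γ : Fin n → Vec p)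
    (P : Fin q → Mat p) (hP : OrthPartition p q P)
    (hdec : ∀ (t : Fin n) (i j : Fin q), i ≠ j → P i * Cov t * P j = 0)
    (j : Fin q)
    (hopt : ∃ β₀ : Vec p, ∀ t : Fin n, IsUMaxOn (dVar (Cov t) (γ t)) (P j) β₀) :
    (∀ t : Fin n,
      IsUMaxOn (fun β => (n : ℝ)⁻¹ * ∑ s, dVar (Cov s) (γ s) β) (P j)
        ((P j) *ᵥ γ t)) ∧
    IsUMaxOn (fun β => (n : ℝ)⁻¹ * ∑ s, dVar (Cov s) (γ s) β) (P j)
      ((P j) *ᵥ ((n : ℝ)⁻¹ • ∑ t, γ t)) ∧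
    (∀ t : Fin n,
      (γ t - (P j) *ᵥ ((n : ℝ)⁻¹ • ∑ s, γ s)) ⬝ᵥ
        ((Cov t) *ᵥ ((P j) *ᵥ ((n : ℝ)⁻¹ • ∑ s, γ s))) = 0) := by

  classical
  obtain ⟨β₀, hβ₀⟩ := hopt
  have hn0 : (0:ℕ) < n := hn
  have hnR : (0:ℝ) < (n:ℝ) := by exact_mod_cast hn0
  have hCsymm : ∀ t, (Cov t)ᵀ = Cov t := by
    intro t
    have := (hCov t).1
    simpa [Matrix.IsHermitian] using this
  -- key matrix identity
  have hkey : ∀ t, ((1 : Mat p) - P j) * (Cov t * P j) = 0 := by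
    intro t
    have h1 : (1 : Mat p) - P j = ∑ i ∈ univ.erase j, P i := by
      have h2 : ∑ i ∈ univ.erase j, P i + P j = ∑ i, P i :=
        Finset.sum_erase_add _ _ (mem_univ j)
      rw [← hP.sum_one, ← h2]
      abel
    rw [h1, Finset.sum_mul]
    apply Finset.sum_eq_zero
    intro i hi
    have hij : i ≠ j := (Finset.mem_erase.mp hi).1
    rw [← Matrix.mul_assoc]
    exact hdec t i j hij
  have hzero : ∀ t (v w : Vec p),
      (((1 : Mat p) - P j) *ᵥ v) ⬝ᵥ (Cov t *ᵥ (P j *ᵥ w)) = 0 := by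
    intro t v w
    have hsy : ((1 : Mat p) - P j)ᵀ = (1 : Mat p) - P j := by
      rw [Matrix.transpose_sub, Matrix.transpose_one, hP.symm]
    rw [mulVec_mulVec, ← hsy, Matrix.mulVec_transpose, Matrix.dotProduct_mulVec,
      Matrix.vecMul_vecMul, hkey t]
    simp
  have hsymdot : ∀ t (v w : Vec p), v ⬝ᵥ (Cov t *ᵥ w) = w ⬝ᵥ (Cov t *ᵥ v) := by
    intro t v w
    rw [Matrix.dotProduct_mulVec, ← hCsymm t, Matrix.vecMul_transpose, dotProduct_comm, hCsymm t]
  -- per-time maximizer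
  have hmax : ∀ t, IsUMaxOn (dVar (Cov t) (γ t)) (P j) (P j *ᵥ γ t) := by
    intro t
    constructor
    · rw [mulVec_mulVec, hP.idem]
    · intro β hβ hne
      set b := P j *ᵥ γ t with hbdef
      set δ := β - b with hδdef
      have hδ0 : δ ≠ 0 := sub_ne_zero.mpr hne
      have hPb : P j *ᵥ b = b := by rw [hbdef, mulVec_mulVec, hP.idem]
      have hPδ : P j *ᵥ δ = δ := by
        rw [hδdef, Matrix.mulVec_sub, hβ, hPb]
      have h0 : (γ t - b) ⬝ᵥ (Cov t *ᵥ δ) = 0 := by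
        have h1 : γ t - b = ((1 : Mat p) - P j) *ᵥ γ t := by
          rw [Matrix.sub_mulVec, Matrix.one_mulVec]
        rw [h1, ← hPδ]
        exact hzero t (γ t) δ
      have hγδ : γ t ⬝ᵥ (Cov t *ᵥ δ) = b ⬝ᵥ (Cov t *ᵥ δ) := by
        rw [sub_dotProduct] at h0; linarith
      have hβval : dVar (Cov t) (γ t) β = dVar (Cov t) (γ t) b - δ ⬝ᵥ (Cov t *ᵥ δ) := by
        have hβeq : β = b + δ := by rw [hδdef]; ring
        rw [hβeq]
        unfold dVar
        simp only [Matrix.mulVec_add, dotProduct_add, add_dotProduct]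
        rw [hsymdot t δ b, hγδ]
        ring
      have hpos : 0 < δ ⬝ᵥ (Cov t *ᵥ δ) := by
        have := (hCov t).dotProduct_mulVec_pos hδ0
        simpa using this
      rw [hβval]
      linarith
  -- uniqueness of maximizers
  have heqt : ∀ t, P j *ᵥ γ t = β₀ := by
    intro t
    by_contra hne
    have h1 := (hβ₀ t).2 (P j *ᵥ γ t) (hmax t).1 hne
    have h2 := (hmax t).2 β₀ (hβ₀ t).1 (Ne.symm hne)
    linarith
  -- the averaged parameter projects to β₀
  have hbar : P j *ᵥ ((n : ℝ)⁻¹ • ∑ t, γ t) = β₀ := by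
    have hsum : P j *ᵥ (∑ t, γ t) = ∑ t : Fin n, (P j *ᵥ γ t) := by
      have h := map_sum (Matrix.mulVecLin (P j)) γ univ
      simpa only [Matrix.mulVecLin_apply] using h
    rw [Matrix.mulVec_smul, hsum]
    simp only [heqt]
    rw [Finset.sum_const, Finset.card_univ, Fintype.card_fin]
    rw [← Nat.cast_smul_eq_nsmul ℝ, smul_smul, inv_mul_cancel₀ (ne_of_gt hnR), one_smul]
  have t0 : Fin n := ⟨0, hn0⟩
  -- averaged maximizer
  have havg : IsUMaxOn (fun β => (n : ℝ)⁻¹ * ∑ s, dVar (Cov s) (γ s) β) (P j) β₀ := by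
    constructor
    · exact (hβ₀ t0).1
    · intro β hβ hne
      have hlt : ∑ s, dVar (Cov s) (γ s) β < ∑ s, dVar (Cov s) (γ s) β₀ := by
        apply Finset.sum_lt_sum_of_nonempty
        · exact ⟨t0, mem_univ t0⟩
        · intro s _
          exact (hβ₀ s).2 β hβ hne
      have hinv : (0:ℝ) < (n:ℝ)⁻¹ := by positivity
      exact (mul_lt_mul_iff_right₀ hinv).mpr hlt
  refine ⟨?_, ?_, ?_⟩
  · intro t
    rw [heqt t]
    exact havg
  · rw [hbar]
    exact havg
  · intro t
    rw [hbar, ← heqt t]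
    have h1 : γ t - P j *ᵥ γ t = ((1 : Mat p) - P j) *ᵥ γ t := by
      rw [Matrix.sub_mulVec, Matrix.one_mulVec]
    rw [h1]
    exact hzero t (γ t) (γ t)
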